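/- Let D ⊆ ℝᵈ be a compact convex set and let f : D → ℝ be a convex function that is Lipschitz continuous on D. Then for every ε > 0 there exist a depth K ≥ 2, nonnegative vectors w₁, …, w_K ∈ ℝ^{2d}, and scalars c₁, …, c_K such that the ReLU network on the expanded input x̂ = (x, −x), defined by z₁(x) = max(w₁·x̂ + c₁, 0), z_i(x) = max(z_{i−1}(x) + wᵢ·x̂ + cᵢ, 0) for i = 2, …, K−1, and z_K(x) = z_{K−1}(x) + w_K·x̂ + c_K, satisfies |f(x) − z_K(x)| ≤ ε for all x ∈ D. -/

import Mathlib

/-- The hidden layers of the nonnegative-weight single-ReLU-per-layer network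
on the expanded input `x̂ ∈ ℝ^{2d}`:
`znet … x̂ i` is the layer `z_{i+1}` of the construction
`z₁ = max (w₁⋅x̂ + c₁) 0`, `z_i = max (z_{i-1} + wᵢ⋅x̂ + cᵢ) 0`. -/
noncomputable def znet (d : ℕ) (w : ℕ → (Fin d ⊕ Fin d) → ℝ) (c : ℕ → ℝ)
    (xhat : Fin d ⊕ Fin d → ℝ) : ℕ → ℝ
  | 0 => max ((∑ l, w 0 l * xhat l) + c 0) 0
  | (i + 1) => max (znet d w c xhat i + ((∑ l, w (i + 1) l * xhat l) + c (i + 1))) 0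



/-- running maximum of `G 0, …, G i` -/
def rmax (G : ℕ → ℝ) : ℕ → ℝ
  | 0 => G 0
  | (i + 1) => max (rmax G i) (G (i + 1))

lemma le_rmax (G : ℕ → ℝ) {j i : ℕ} (h : j ≤ i) : G j ≤ rmax G i := by
  induction i with
  | zero => simp_all [rmax]
  | succ n ih =>
      rcases Nat.lt_or_ge j (n+1) with h' | h'
      · exact (ih (Nat.lt_succ_iff.mp h')).trans (le_max_left _ _)
      · have : j = n + 1 := le_antisymm h h'
        rw [this, rmax]; exact le_max_right _ _

lemma rmax_le (G : ℕ → ℝ) {i : ℕ} {M : ℝ} (h : ∀ j, j ≤ i → G j ≤ M) :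
    rmax G i ≤ M := by
  induction i with
  | zero => exact h 0 le_rfl
  | succ n ih =>
      rw [rmax]
      exact max_le (ih fun j hj => h j (hj.trans (Nat.le_succ n))) (h (n+1) le_rfl)

lemma aux_expand (d : ℕ) (v x : Fin d → ℝ) :
    ∑ l : Fin d ⊕ Fin d,
      (Sum.elim (fun j => max (v j) 0) (fun j => max (-v j) 0)) l *
        (Sum.elim x (fun j => -x j)) l = ∑ j, v j * x j := by
  rw [Fintype.sum_sum_type, ← Finset.sum_add_distrib]
  refine Finset.sum_congr rfl fun j _ => ?_
  simp only [Sum.elim_inl, Sum.elim_inr]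
  rcases le_total (v j) 0 with h | h
  · rw [max_eq_right h, max_eq_left (by linarith)]; ring
  · rw [max_eq_left h, max_eq_right (by linarith)]; ring

lemma aux_znet_eq (d : ℕ) (w : ℕ → (Fin d ⊕ Fin d) → ℝ) (c : ℕ → ℝ)
    (xhat : Fin d ⊕ Fin d → ℝ) (G : ℕ → ℝ) :
    ∀ i : ℕ, (∀ j, j ≤ i → (∑ l, w j l * xhat l) + c j = G j - G (j+1)) →
      znet d w c xhat i = rmax G (i+1) - G (i+1) := by
  intro i
  induction i with
  | zero =>
      intro h
      rw [znet, h 0 le_rfl, show rmax G 1 = max (rmax G 0) (G 1) from rfl,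
        ← max_sub_sub_right, sub_self, show rmax G 0 = G 0 from rfl]
  | succ n ih =>
      intro h
      rw [znet, ih (fun j hj => h j (hj.trans (Nat.le_succ n))), h (n+1) le_rfl,
        show rmax G (n+1+1) = max (rmax G (n+1)) (G (n+1+1)) from rfl,
        ← max_sub_sub_right, sub_self]
      congr 1
      ring

lemma aux_minorant (d : ℕ) (F : (Fin d → ℝ) → ℝ) (hF : ConvexOn ℝ Set.univ F)
    (hFc : Continuous F) (x₀ : Fin d → ℝ) (t : ℝ) (ht : 0 < t) :
    ∃ (a : Fin d → ℝ) (b : ℝ), (∀ x, (∑ l, a l * x l) + b ≤ F x) ∧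
      F x₀ - t ≤ (∑ l, a l * x₀ l) + b := by
  have hSconv : Convex ℝ {p : (Fin d → ℝ) × ℝ | p.1 ∈ Set.univ ∧ F p.1 ≤ p.2} :=
    hF.convex_epigraph
  have hSeq : {p : (Fin d → ℝ) × ℝ | p.1 ∈ Set.univ ∧ F p.1 ≤ p.2}
      = {p : (Fin d → ℝ) × ℝ | F p.1 ≤ p.2} := by
    ext p; simp
  rw [hSeq] at hSconv
  have hSclosed : IsClosed {p : (Fin d → ℝ) × ℝ | F p.1 ≤ p.2} :=
    isClosed_le (hFc.comp continuous_fst) continuous_snd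
  have hx : (x₀, F x₀ - t) ∉ {p : (Fin d → ℝ) × ℝ | F p.1 ≤ p.2} := by
    simp only [Set.mem_setOf_eq]; push_neg; linarith
  obtain ⟨φ, u, hu1, hu2⟩ := geometric_hahn_banach_point_closed hSconv hSclosed hx
  set β : ℝ := φ (0, 1) with hβ
  have hdecomp : ∀ (x : Fin d → ℝ) (s : ℝ), φ (x, s) = φ (x, 0) + s * β := by
    intro x s
    have : ((x, s) : (Fin d → ℝ) × ℝ) = (x, 0) + s • ((0 : Fin d → ℝ), 1) := by
      simp [Prod.ext_iff]
    rw [this, map_add, map_smul, smul_eq_mul]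
  have h1 : u < φ (x₀, F x₀) := hu2 (x₀, F x₀) (by simp)
  have h2 : φ (x₀, F x₀ - t) < u := hu1
  rw [hdecomp] at h1 h2
  have hβpos : 0 < β := by nlinarith
  -- the linear part on the first coordinate
  set ψ : (Fin d → ℝ) →L[ℝ] ℝ := φ.comp (ContinuousLinearMap.inl ℝ (Fin d → ℝ) ℝ)
    with hψ
  have hψval : ∀ x : Fin d → ℝ, ψ x = φ (x, 0) := fun x => rfl
  have hψsum : ∀ x : Fin d → ℝ,
      ψ x = ∑ l, x l * ψ (fun j => if l = j then 1 else 0) := by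
    intro x
    have := (ψ : (Fin d → ℝ) →ₗ[ℝ] ℝ).pi_apply_eq_sum_univ x
    simpa [smul_eq_mul] using this
  refine ⟨fun l => -(ψ (fun j => if l = j then 1 else 0)) / β, u / β, ?_, ?_⟩
  · intro x
    have hux : u < φ (x, 0) + F x * β := by
      have := hu2 (x, F x) (by simp)
      rwa [hdecomp] at this
    have hsum : (∑ l, -(ψ fun j => if l = j then 1 else 0) / β * x l) + u / β
        = (u - ψ x) / β := by
      rw [hψsum x]
      field_simp
      rw [Finset.mul_sum]
      have hterm : ∀ l : Fin d, β * -((ψ fun j => if l = j then 1 else 0) * x l / β)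
          = -(x l * ψ fun j => if l = j then 1 else 0) := by
        intro l; rw [mul_neg, mul_div_assoc', mul_comm β, mul_div_assoc, div_self (ne_of_gt hβpos)]; ring
      rw [Finset.sum_congr rfl fun l _ => hterm l, Finset.sum_neg_distrib]
      ring
    rw [hsum, div_le_iff₀ hβpos]
    rw [hψval] at *
    linarith
  · have hsum : (∑ l, -(ψ fun j => if l = j then 1 else 0) / β * x₀ l) + u / β
        = (u - ψ x₀) / β := by
      rw [hψsum x₀]
      field_simp
      rw [Finset.mul_sum]
      have hterm : ∀ l : Fin d, β * -((ψ fun j => if l = j then 1 else 0) * x₀ l / β)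
          = -(x₀ l * ψ fun j => if l = j then 1 else 0) := by
        intro l; rw [mul_neg, mul_div_assoc', mul_comm β, mul_div_assoc, div_self (ne_of_gt hβpos)]; ring
      rw [Finset.sum_congr rfl fun l _ => hterm l, Finset.sum_neg_distrib]
      ring
    rw [hsum, le_div_iff₀ hβpos]
    rw [hψval] at *
    nlinarith

lemma aux_slope (d : ℕ) (F : (Fin d → ℝ) → ℝ) (L : ℝ)
    (hL : ∀ x y, F x ≤ F y + L * ‖x - y‖)
    (a x₀ : Fin d → ℝ) (b t : ℝ) (ht : 0 < t)
    (hmin : ∀ x, (∑ l, a l * x l) + b ≤ F x)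
    (hx0 : F x₀ - t ≤ (∑ l, a l * x₀ l) + b) :
    ∀ v : Fin d → ℝ, (∑ l, a l * v l) ≤ L * ‖v‖ := by
  intro v
  refine le_of_forall_pos_le_add fun η hη => ?_
  set R : ℝ := t / η with hR
  have hRpos : 0 < R := div_pos ht hη
  have h1 := hmin (x₀ + R • v)
  have h2 := hL (x₀ + R • v) x₀
  have h3 : ‖x₀ + R • v - x₀‖ = R * ‖v‖ := by
    rw [add_sub_cancel_left, norm_smul, Real.norm_eq_abs, abs_of_pos hRpos]
  have h4 : (∑ l, a l * (x₀ + R • v) l) = (∑ l, a l * x₀ l) + R * (∑ l, a l * v l) := by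
    rw [Finset.mul_sum, ← Finset.sum_add_distrib]
    refine Finset.sum_congr rfl fun l _ => ?_
    simp only [Pi.add_apply, Pi.smul_apply, smul_eq_mul]
    ring
  rw [h4] at h1
  rw [h3] at h2
  -- R * ℓ v ≤ t + L R ‖v‖, divide by R = t/η
  have h5 : R * (∑ l, a l * v l) ≤ t + L * (R * ‖v‖) := by linarith
  have h6 : (∑ l, a l * v l) ≤ t / R + L * ‖v‖ := by
    rw [div_add' _ _ _ (ne_of_gt hRpos), le_div_iff₀ hRpos]
    nlinarith
  have h7 : t / R = η := by
    rw [hR]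
    field_simp
  linarith [h6, h7.le]

/-- **Theorem 1 (representation power of ICNN).**
Let `D ⊆ ℝᵈ` be a compact convex set and `f : D → ℝ` convex and Lipschitz
continuous on `D`.  For every `ε > 0` there exist a depth `K + 2 ≥ 2`,
nonnegative vectors `w₁, …, w_{K+2} ∈ ℝ^{2d}` and scalars `c₁, …, c_{K+2}` such
that the ReLU network on the expanded input `x̂ = (x, -x)`, defined by
`z₁(x) = max (w₁⋅x̂ + c₁) 0`, `z_i(x) = max (z_{i-1}(x) + wᵢ⋅x̂ + cᵢ) 0` for
`i = 2, …, K+1`, and `z_{K+2}(x) = z_{K+1}(x) + w_{K+2}⋅x̂ + c_{K+2}`,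
satisfies `|f x - z_{K+2}(x)| ≤ ε` for all `x ∈ D`. -/
theorem icnn_representation_power
    (d : ℕ) (D : Set (Fin d → ℝ)) (hDconv : Convex ℝ D) (hDcomp : IsCompact D)
    (f : (Fin d → ℝ) → ℝ) (hconv : ConvexOn ℝ D f)
    (hLip : ∃ L : NNReal, LipschitzOnWith L f D)
    (ε : ℝ) (hε : 0 < ε) :
    ∃ (K : ℕ) (w : ℕ → (Fin d ⊕ Fin d) → ℝ) (c : ℕ → ℝ),
      (∀ i, i ≤ K + 1 → ∀ l, 0 ≤ w i l) ∧
      ∀ x ∈ D,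
        |f x - (znet d w c (Sum.elim x (fun l => -x l)) K +
          ((∑ l, w (K + 1) l * Sum.elim x (fun l' => -x l') l) + c (K + 1)))| ≤ ε := by
  classical
  obtain ⟨L, hLipf⟩ := hLip
  by_cases hne : D.Nonempty
  swap
  · exact ⟨0, fun _ _ => 0, fun _ => 0, fun i _ l => le_rfl,
      fun x hx => absurd ⟨x, hx⟩ hne⟩
  obtain ⟨y₀, hy₀⟩ := hne
  haveI : Nonempty D := ⟨⟨y₀, hy₀⟩⟩
  set Lr : ℝ := (L : ℝ) with hLrdef
  have hLr0 : (0:ℝ) ≤ Lr := L.coe_nonneg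
  have hfl : ∀ x ∈ D, ∀ y ∈ D, f x ≤ f y + Lr * ‖x - y‖ := by
    intro x hx y hy
    have h := hLipf.dist_le_mul x hx y hy
    rw [Real.dist_eq, dist_eq_norm] at h
    have := abs_le.mp h
    linarith [this.2]
  -- the inf-convolution extension of f
  set F : (Fin d → ℝ) → ℝ :=
    fun x => ⨅ y : D, (f y + Lr * ‖x - (y : Fin d → ℝ)‖) with hFdef
  have hFbdd : ∀ x : Fin d → ℝ, ∀ y : D,
      f y₀ - Lr * ‖x - y₀‖ ≤ f y + Lr * ‖x - (y : Fin d → ℝ)‖ := by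
    intro x y
    have h1 := hfl y₀ hy₀ y y.2
    have h2 : ‖y₀ - (y : Fin d → ℝ)‖ ≤ ‖x - y₀‖ + ‖x - (y : Fin d → ℝ)‖ := by
      have := dist_triangle y₀ x (y : Fin d → ℝ)
      rw [dist_eq_norm, dist_eq_norm, dist_eq_norm, norm_sub_rev y₀ x] at this
      linarith
    nlinarith [mul_le_mul_of_nonneg_left h2 hLr0]
  have hFbdd' : ∀ x : Fin d → ℝ,
      BddBelow (Set.range fun y : D => f y + Lr * ‖x - (y : Fin d → ℝ)‖) :=
    fun x => ⟨f y₀ - Lr * ‖x - y₀‖, by rintro _ ⟨y, rfl⟩; exact hFbdd x y⟩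
  have hFle : ∀ (x : Fin d → ℝ) (y : D), F x ≤ f y + Lr * ‖x - (y : Fin d → ℝ)‖ :=
    fun x y => ciInf_le (hFbdd' x) y
  have hFeq : ∀ x ∈ D, F x = f x := by
    intro x hx
    refine le_antisymm ?_ ?_
    · simpa using hFle x ⟨x, hx⟩
    · rw [hFdef]
      refine le_ciInf fun y => ?_
      have := hfl x hx y y.2
      linarith
  have hFlip : ∀ x x' : Fin d → ℝ, F x ≤ F x' + Lr * ‖x - x'‖ := by
    intro x x'
    rw [← sub_le_iff_le_add]
    conv_rhs => rw [hFdef]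
    refine le_ciInf fun y => ?_
    have h1 := hFle x y
    have h2 : ‖x - (y : Fin d → ℝ)‖ ≤ ‖x - x'‖ + ‖x' - (y : Fin d → ℝ)‖ := by
      have := dist_triangle x x' (y : Fin d → ℝ)
      rw [dist_eq_norm, dist_eq_norm, dist_eq_norm] at this
      linarith
    nlinarith [mul_le_mul_of_nonneg_left h2 hLr0]
  have hFconv : ConvexOn ℝ Set.univ F := by
    refine ⟨convex_univ, fun x _ x' _ θ σ hθ hσ hsum => ?_⟩
    refine le_of_forall_pos_le_add fun η hη => ?_
    obtain ⟨y₁, hy₁⟩ : ∃ y : D, f y + Lr * ‖x - (y : Fin d → ℝ)‖ < F x + η :=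
      exists_lt_of_ciInf_lt (by linarith : F x < F x + η)
    obtain ⟨y₂, hy₂⟩ : ∃ y : D, f y + Lr * ‖x' - (y : Fin d → ℝ)‖ < F x' + η :=
      exists_lt_of_ciInf_lt (by linarith : F x' < F x' + η)
    have hymD : θ • (y₁ : Fin d → ℝ) + σ • (y₂ : Fin d → ℝ) ∈ D :=
      hDconv y₁.2 y₂.2 hθ hσ hsum
    have e0 := hFle (θ • x + σ • x') ⟨_, hymD⟩
    have e1 : f (θ • (y₁ : Fin d → ℝ) + σ • (y₂ : Fin d → ℝ)) ≤
        θ * f y₁ + σ * f y₂ := by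
      have := hconv.2 y₁.2 y₂.2 hθ hσ hsum
      simpa [smul_eq_mul] using this
    have e2 : ‖θ • x + σ • x' - (θ • (y₁ : Fin d → ℝ) + σ • (y₂ : Fin d → ℝ))‖ ≤
        θ * ‖x - (y₁ : Fin d → ℝ)‖ + σ * ‖x' - (y₂ : Fin d → ℝ)‖ := by
      have hrw : θ • x + σ • x' - (θ • (y₁ : Fin d → ℝ) + σ • (y₂ : Fin d → ℝ))
          = θ • (x - (y₁ : Fin d → ℝ)) + σ • (x' - (y₂ : Fin d → ℝ)) := by
        module
      rw [hrw]
      refine (norm_add_le _ _).trans ?_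
      rw [norm_smul, norm_smul, Real.norm_eq_abs, Real.norm_eq_abs,
        abs_of_nonneg hθ, abs_of_nonneg hσ]
    have e3 : Lr * ‖θ • x + σ • x' - (θ • (y₁ : Fin d → ℝ) + σ • (y₂ : Fin d → ℝ))‖ ≤
        Lr * (θ * ‖x - (y₁ : Fin d → ℝ)‖) + Lr * (σ * ‖x' - (y₂ : Fin d → ℝ)‖) := by
      have := mul_le_mul_of_nonneg_left e2 hLr0
      linarith [this, (mul_add Lr (θ * ‖x - (y₁ : Fin d → ℝ)‖) (σ * ‖x' - (y₂ : Fin d → ℝ)‖)).le]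
    have k1 : θ * (f y₁ + Lr * ‖x - (y₁ : Fin d → ℝ)‖) ≤ θ * (F x + η) :=
      mul_le_mul_of_nonneg_left hy₁.le hθ
    have k2 : σ * (f y₂ + Lr * ‖x' - (y₂ : Fin d → ℝ)‖) ≤ σ * (F x' + η) :=
      mul_le_mul_of_nonneg_left hy₂.le hσ
    have k1' : θ * f y₁ + Lr * (θ * ‖x - (y₁ : Fin d → ℝ)‖) ≤ θ * F x + θ * η := by
      linear_combination k1
    have k2' : σ * f y₂ + Lr * (σ * ‖x' - (y₂ : Fin d → ℝ)‖) ≤ σ * F x' + σ * η := by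
      linear_combination k2
    have hη' : θ * η + σ * η = η := by rw [← add_mul, hsum, one_mul]
    have goalsmul : θ • F x + σ • F x' = θ * F x + σ * F x' := by
      simp [smul_eq_mul]
    rw [goalsmul]
    linarith [e0, e1, e3, k1', k2']
  have hFcont : Continuous F := by
    have : LipschitzWith L F := by
      refine LipschitzWith.of_dist_le_mul fun x y => ?_
      rw [Real.dist_eq, dist_eq_norm, abs_sub_le_iff]
      constructor
      · have := hFlip x y; rw [hLrdef] at this; linarith
      · have := hFlip y x; rw [norm_sub_rev] at this; rw [hLrdef] at this; linarith
    exact this.continuous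
  -- finite net
  set δ : ℝ := ε / (4 * (Lr + 1)) with hδdef
  have hδpos : (0:ℝ) < δ := by
    rw [hδdef]; positivity
  obtain ⟨s, hsD, hsfin, hscov⟩ := hDcomp.elim_finite_subcover_image
    (b := D) (c := fun y => Metric.ball y δ) (fun x _ => Metric.isOpen_ball)
    (fun x hx => Set.mem_biUnion hx (Metric.mem_ball_self hδpos))
  set lst : List (Fin d → ℝ) := hsfin.toFinset.toList with hlstdef
  have hmem_lst : ∀ y ∈ s, y ∈ lst := by
    intro y hy
    rw [hlstdef, Finset.mem_toList, Set.Finite.mem_toFinset]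
    exact hy
  obtain ⟨ycov, hycovs, _⟩ : ∃ y ∈ s, y₀ ∈ Metric.ball y δ := by
    simpa using hscov hy₀
  have hlen : 0 < lst.length := List.length_pos_iff.mpr (List.ne_nil_of_mem (hmem_lst _ hycovs))
  set K : ℕ := lst.length - 1 with hKdef
  have hm : lst.length = K + 1 := (Nat.succ_pred_eq_of_pos hlen).symm
  set p : ℕ → (Fin d → ℝ) := fun i => lst.getD i y₀ with hpdef
  have hcover : ∀ x ∈ D, ∃ j, j ≤ K ∧ ‖x - p j‖ < δ := by
    intro x hx
    obtain ⟨y, hys, hball⟩ : ∃ y ∈ s, x ∈ Metric.ball y δ := by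
      simpa using hscov hx
    obtain ⟨j, hj, hget⟩ := List.mem_iff_getElem.mp (hmem_lst y hys)
    refine ⟨j, by omega, ?_⟩
    have hpj : p j = y := by
      rw [hpdef]; simp only; rw [List.getD_eq_getElem lst y₀ hj, hget]
    rw [hpj]
    rw [Metric.mem_ball, dist_eq_norm] at hball
    exact hball
  -- affine minorants
  choose a b hab1 hab2 using fun q : Fin d → ℝ =>
    aux_minorant d F hFconv hFcont q (ε/4) (by positivity)
  have hslope : ∀ q v : Fin d → ℝ, (∑ l, a q l * v l) ≤ Lr * ‖v‖ :=
    fun q => aux_slope d F Lr hFlip (a q) q (b q) (ε/4) (by positivity) (hab1 q) (hab2 q)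
  set α : ℕ → (Fin d → ℝ) := fun i => a (p (min i K)) with hαdef
  set Bc : ℕ → ℝ := fun i => b (p (min i K)) with hBcdef
  set w0 : ℕ → (Fin d ⊕ Fin d) → ℝ := fun i => if i ≤ K then
      Sum.elim (fun j => max (α i j - α (i+1) j) 0)
        (fun j => max (-(α i j - α (i+1) j)) 0)
    else Sum.elim (fun j => max (α K j) 0) (fun j => max (-(α K j)) 0) with hw0def
  set c0 : ℕ → ℝ := fun i => if i ≤ K then Bc i - Bc (i+1) else Bc K with hc0def
  refine ⟨K, w0, c0, ?_, ?_⟩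
  · intro i _ l
    rw [hw0def]
    by_cases h : i ≤ K <;> simp only [h, if_true, if_false] <;>
      rcases l with l | l <;> simp [le_max_right]
  · intro x hx
    set Gv : ℕ → ℝ := fun i => (∑ j, α i j * x j) + Bc i with hGvdef
    have hz := aux_znet_eq d w0 c0 (Sum.elim x (fun l => -x l)) Gv K ?_
    swap
    · intro j hj
      rw [hw0def, hc0def]
      simp only [if_pos hj]
      rw [aux_expand d (fun j' => α j j' - α (j+1) j') x]
      rw [hGvdef]
      simp only
      rw [Finset.sum_congr rfl (fun l _ => sub_mul (α j l) (α (j+1) l) (x l)),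
        Finset.sum_sub_distrib]
      ring
    rw [hz]
    have hKK : ¬ (K + 1 ≤ K) := by omega
    rw [hw0def, hc0def]
    simp only [if_neg hKK]
    rw [aux_expand d (α K) x]
    have hαK : α (K+1) = α K := by
      rw [hαdef]; simp only; rw [min_eq_right (Nat.le_succ K), min_self]
    have hBcK : Bc (K+1) = Bc K := by
      rw [hBcdef]; simp only; rw [min_eq_right (Nat.le_succ K), min_self]
    have hGvK : Gv (K+1) = (∑ j, α K j * x j) + Bc K := by
      rw [hGvdef]; simp only; rw [hαK, hBcK]
    have hout : rmax Gv (K+1) - Gv (K+1) + ((∑ j, α K j * x j) + Bc K)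
        = rmax Gv (K+1) := by rw [hGvK]; ring
    rw [hout]
    -- upper bound
    have hub : rmax Gv (K+1) ≤ F x := by
      refine rmax_le Gv fun j _ => ?_
      exact hab1 (p (min j K)) x
    -- lower bound
    obtain ⟨j, hjK, hjball⟩ := hcover x hx
    have hminj : min j K = j := min_eq_left hjK
    have hGvj : Gv j = (∑ l, a (p j) l * x l) + b (p j) := by
      rw [hGvdef]; simp only; rw [hαdef, hBcdef]; simp only [hminj]
    have hA1 := hab2 (p j)
    have hA2 := hslope (p j) (p j - x)
    have hA2' : (∑ l, a (p j) l * (p j - x) l)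
        = (∑ l, a (p j) l * p j l) - (∑ l, a (p j) l * x l) := by
      rw [← Finset.sum_sub_distrib]
      refine Finset.sum_congr rfl fun l _ => ?_
      simp only [Pi.sub_apply]
      ring
    rw [hA2'] at hA2
    have hA3 := hFlip x (p j)
    have hnrev : ‖p j - x‖ = ‖x - p j‖ := norm_sub_rev _ _
    rw [hnrev] at hA2
    have hkey : 2 * Lr * δ ≤ ε / 2 := by
      rw [hδdef]
      rw [show 2 * Lr * (ε / (4 * (Lr + 1))) = (2 * Lr * ε) / (4 * (Lr + 1)) by ring]
      rw [div_le_iff₀ (by positivity)]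
      nlinarith [hε.le, hLr0]
    have hLrd : Lr * ‖x - p j‖ ≤ Lr * δ :=
      mul_le_mul_of_nonneg_left hjball.le hLr0
    have hlb : F x - ε ≤ Gv j := by
      rw [hGvj]
      nlinarith [hA1, hA2, hA3, hLrd, hkey, hε.le]
    have hrmaxlb : Gv j ≤ rmax Gv (K+1) := le_rmax Gv (hjK.trans (Nat.le_succ K))
    rw [abs_sub_le_iff]
    rw [hFeq x hx] at hub hlb
    constructor <;> linarith
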